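/- Let H be a real Hilbert space and L : H × H → ℝ ∪ {+∞} an anti-selfdual Lagrangian that is uniformly convex in the first variable. Suppose 0 ∈ Dom₁(∂L), i.e., there exist p, q ∈ H with (p,0) ∈ ∂L(0,q). Then there is a constant C > 0 (one may take C = (‖p‖ + ‖q‖)/2) such that for every λ > 0, every y_λ ∈ H satisfying −(y_λ, 0) ∈ ∂L_λ(0, y_λ) obeys ‖y_λ‖ ≤ C. -/

import Mathlib

open scoped RealInnerProductSpace NNReal

noncomputable section

/-- Convexity for `EReal`-valued functions. -/
def ERealConvexOn {E : Type*} [AddCommGroup E] [Module ℝ E] (f : E → EReal) : Prop :=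
  ∀ x y : E, ∀ s t : ℝ, 0 ≤ s → 0 ≤ t → s + t = 1 →
    f (s • x + t • y) ≤ (s : EReal) * f x + (t : EReal) * f y

/-- The Legendre–Fenchel dual, in both variables, of a Lagrangian on `H × H`. -/
def lagrangianDualH {H : Type*} [NormedAddCommGroup H] [InnerProductSpace ℝ H]
    (L : H × H → EReal) (q y : H) : EReal :=
  ⨆ x : H, ⨆ p : H, ((⟪q, x⟫ + ⟪y, p⟫ : ℝ) : EReal) - L (x, p)

/-- A Lagrangian on a Hilbert space is anti-selfdual if `L*(p,x) = L(−x,−p)`. -/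
def IsASDH {H : Type*} [NormedAddCommGroup H] [InnerProductSpace ℝ H]
    (L : H × H → EReal) : Prop :=
  ∀ p x : H, lagrangianDualH L p x = L (-x, -p)

/-- `(q,y) ∈ ∂L(x,p)`, the subdifferential of the Lagrangian `L` at `(x,p)`. -/
def MemSubdiff {H : Type*} [NormedAddCommGroup H] [InnerProductSpace ℝ H]
    (L : H × H → EReal) (x p q y : H) : Prop :=
  ∀ z r : H, L (x, p) + ((⟪q, z - x⟫ + ⟪y, r - p⟫ : ℝ) : EReal) ≤ L (z, r)

/-- `y ∈ ∂₂L(u,v)`, the subdifferential in the second variable. -/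
def MemSubdiff2 {H : Type*} [NormedAddCommGroup H] [InnerProductSpace ℝ H]
    (L : H × H → EReal) (u v y : H) : Prop :=
  ∀ r : H, L (u, v) + ((⟪y, r - v⟫ : ℝ) : EReal) ≤ L (u, r)

/-- `q ∈ ∂₁L(x,p)`, the subdifferential in the first variable. -/
def MemSubdiff1 {H : Type*} [NormedAddCommGroup H] [InnerProductSpace ℝ H]
    (L : H × H → EReal) (x p q : H) : Prop :=
  ∀ z : H, L (x, p) + ((⟪q, z - x⟫ : ℝ) : EReal) ≤ L (z, p)

/-- The `λ`-regularization of a Lagrangian: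
`L_λ(x,p) = inf_z { L(z,p) + ‖x−z‖²/(2λ) } + (λ/2)‖p‖²`. -/
def lagReg {H : Type*} [NormedAddCommGroup H] [InnerProductSpace ℝ H]
    (lam : ℝ) (L : H × H → EReal) (x p : H) : EReal :=
  (⨅ z : H, L (z, p) + ((‖x - z‖ ^ 2 / (2 * lam) : ℝ) : EReal))
    + ((lam / 2 * ‖p‖ ^ 2 : ℝ) : EReal)

/-- if `0 ∈ Dom₁(∂L)` (witnessed by `(p,0) ∈ ∂L(0,q)`), then solutions `y_λ` of
`−(y_λ,0) ∈ ∂L_λ(0,y_λ)` are bounded uniformly in `λ > 0`; one may take the bound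
`C = (‖p‖ + ‖q‖)/2`. -/
theorem stmt13 {H : Type*} [NormedAddCommGroup H] [InnerProductSpace ℝ H] [CompleteSpace H]
    (L : H × H → EReal)
    (hconv : ERealConvexOn L)
    (hlsc : LowerSemicontinuous L)
    (hproper : ∃ z, L z ≠ ⊤) (hreal : ∀ z, L z ≠ ⊥)
    (hASD : IsASDH L)
    (ε : ℝ) (hε : 0 < ε)
    (hunif : ∀ p : H, ERealConvexOn (fun x : H =>
      L (x, p) - ((ε / 2 * ‖x‖ ^ 2 : ℝ) : EReal)))
    (p q : H) (hpq : MemSubdiff L 0 q p 0) :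
    (∃ C : ℝ, 0 < C ∧
      ∀ lam : ℝ, 0 < lam → ∀ ylam : H,
        MemSubdiff (fun zp : H × H => lagReg lam L zp.1 zp.2) 0 ylam (-ylam) 0 →
        ‖ylam‖ ≤ C) ∧
    -- one may take `C = (‖p‖ + ‖q‖)/2`
    (∀ lam : ℝ, 0 < lam → ∀ ylam : H,
      MemSubdiff (fun zp : H × H => lagReg lam L zp.1 zp.2) 0 ylam (-ylam) 0 →
      ‖ylam‖ ≤ (‖p‖ + ‖q‖) / 2) := by
  classical
  -- representation of L from anti-selfduality
  have hrep : ∀ z r : H, L (z, r)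
      = ⨆ x : H, ⨆ p' : H, ((⟪-r, x⟫ + ⟪-z, p'⟫ : ℝ) : EReal) - L (x, p') := by
    intro z r
    have h := hASD (-r) (-z)
    rw [neg_neg, neg_neg] at h
    rw [← h]; rfl
  -- Lemma A : L(z,r) ≥ -⟪z,r⟫
  have hA : ∀ z r : H, ((-⟪z, r⟫ : ℝ) : EReal) ≤ L (z, r) := by
    intro z r
    have h1 : ((⟪-r, z⟫ + ⟪-z, r⟫ : ℝ) : EReal) - L (z, r) ≤ L (z, r) := by
      conv_rhs => rw [hrep z r]
      exact le_iSup₂ (f := fun x p' => ((⟪-r, x⟫ + ⟪-z, p'⟫ : ℝ) : EReal) - L (x, p')) z r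
    have hin : (⟪-r, z⟫ + ⟪-z, r⟫ : ℝ) = -(2 * ⟪z, r⟫) := by
      rw [inner_neg_left, inner_neg_left, real_inner_comm r z]; ring
    rw [hin] at h1
    rcases eq_or_ne (L (z, r)) ⊤ with h | h
    · rw [h]; exact le_top
    · have ht := EReal.coe_toReal h (hreal _)
      rw [← ht] at h1 ⊢
      rw [← EReal.coe_sub, EReal.coe_le_coe_iff] at h1
      rw [EReal.coe_le_coe_iff]
      linarith
  -- L(0,q) is finite
  obtain ⟨z0, hz0⟩ := hproper
  have hq_ne_top : L (0, q) ≠ ⊤ := by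
    intro htop
    have h := hpq z0.1 z0.2
    rw [htop, EReal.top_add_of_ne_bot (EReal.coe_ne_bot _)] at h
    exact hz0 (top_le_iff.mp (by simpa using h))
  have hq_nonneg : (0 : EReal) ≤ L (0, q) := by
    have := hA 0 q
    simpa using this
  set c : ℝ := (L (0, q)).toReal with hcdef
  have hc : ((c : ℝ) : EReal) = L (0, q) := EReal.coe_toReal hq_ne_top (hreal _)
  have hc0 : 0 ≤ c := by
    rw [← hc] at hq_nonneg
    exact_mod_cast hq_nonneg
  -- simplified form of hpq : (c + ⟪p,x⟫ : ℝ) ≤ L (x, p')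
  have hpq' : ∀ x p' : H, ((c + ⟪p, x⟫ : ℝ) : EReal) ≤ L (x, p') := by
    intro x p'
    have h := hpq x p'
    rw [← hc] at h
    have hin : (⟪p, x - 0⟫ + ⟪(0 : H), p' - q⟫ : ℝ) = ⟪p, x⟫ := by
      simp
    rw [hin, ← EReal.coe_add] at h
    exact h
  -- L(0,-p) ≤ -c
  have hop : L (0, -p) ≤ ((-c : ℝ) : EReal) := by
    have h := hASD p 0
    rw [neg_zero] at h
    rw [← h]
    refine iSup₂_le fun x p' => ?_
    rcases eq_or_ne (L (x, p')) ⊤ with ht | ht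
    · rw [ht, EReal.sub_top]; exact bot_le
    · have htr := EReal.coe_toReal ht (hreal _)
      have h2 := hpq' x p'
      rw [← htr] at h2 ⊢
      rw [EReal.coe_le_coe_iff] at h2
      rw [← EReal.coe_sub, EReal.coe_le_coe_iff]
      have hin : (⟪p, x⟫ + ⟪(0 : H), p'⟫ : ℝ) = ⟪p, x⟫ := by simp
      rw [hin]
      linarith
  have hop_nonneg : (0 : EReal) ≤ L (0, -p) := by
    have := hA 0 (-p)
    simpa using this
  have hcz : c = 0 := by
    have h := le_trans hop_nonneg hop
    have : (0 : ℝ) ≤ -c := by exact_mod_cast h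
    linarith
  have hq0 : L (0, q) = 0 := by rw [← hc, hcz]; rfl
  have hp0 : L (0, -p) = 0 := by
    refine le_antisymm ?_ hop_nonneg
    rw [hcz] at hop
    simpa using hop
  -- convexity midpoint
  set r₀ : H := (1 / 2 : ℝ) • (q - p) with hr₀
  have hmid : L (0, r₀) ≤ 0 := by
    have h := hconv (0, q) (0, -p) (1/2) (1/2) (by norm_num) (by norm_num) (by norm_num)
    have hpt : (1/2 : ℝ) • ((0 : H), q) + (1/2 : ℝ) • ((0 : H), -p) = ((0 : H), r₀) := by
      rw [hr₀]
      ext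
      · simp
      · simp [smul_sub, sub_eq_add_neg]
    rw [hpt, hq0, hp0, mul_zero, add_zero] at h
    exact h
  -- linear lower bound with slope -r₀
  have hlb : ∀ w r' : H, ((⟪-r₀, w⟫ : ℝ) : EReal) ≤ L (w, r') := by
    intro w r'
    have h1 : ((⟪p, w⟫ : ℝ) : EReal) ≤ L (w, r') := by
      have := hpq' w r'
      rw [hcz, zero_add] at this
      exact this
    have h2 : ((-⟪q, w⟫ : ℝ) : EReal) ≤ L (w, r') := by
      have h3 : ((⟪-r', 0⟫ + ⟪-w, q⟫ : ℝ) : EReal) - L (0, q) ≤ L (w, r') := by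
        conv_rhs => rw [hrep w r']
        exact le_iSup₂ (f := fun x p' => ((⟪-r', x⟫ + ⟪-w, p'⟫ : ℝ) : EReal) - L (x, p')) 0 q
      have hin : (⟪-r', (0 : H)⟫ + ⟪-w, q⟫ : ℝ) = -⟪q, w⟫ := by
        rw [inner_neg_left, real_inner_comm w q]; simp
      rw [hin, hq0, sub_zero] at h3
      exact h3
    have hval : (⟪-r₀, w⟫ : ℝ) = (⟪p, w⟫ - ⟪q, w⟫) / 2 := by
      rw [hr₀, ← smul_neg, real_inner_smul_left, neg_sub, inner_sub_left]
      ring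
    rcases le_total (⟪p, w⟫ : ℝ) (-⟪q, w⟫) with hle | hle
    · refine le_trans ?_ h2
      rw [EReal.coe_le_coe_iff, hval]; linarith
    · refine le_trans ?_ h1
      rw [EReal.coe_le_coe_iff, hval]; linarith
  -- the main estimate
  have hmain : ∀ lam : ℝ, 0 < lam → ∀ ylam : H,
      MemSubdiff (fun zp : H × H => lagReg lam L zp.1 zp.2) 0 ylam (-ylam) 0 →
      ‖ylam‖ ≤ ‖r₀‖ := by
    intro lam hlam ylam hy
    set ny : ℝ := ‖ylam‖ with hny
    set nd : ℝ := ‖r₀‖ with hnd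
    have hy' := hy (-(lam • ylam)) r₀
    simp only [] at hy'
    have hin : (⟪-ylam, -(lam • ylam) - 0⟫ + ⟪(0 : H), r₀ - ylam⟫ : ℝ) = lam * ny ^ 2 := by
      rw [hny]
      simp [inner_neg_neg, real_inner_smul_right, real_inner_self_eq_norm_sq]
    rw [hin] at hy'
    -- lower bound on lagReg lam L 0 ylam
    have hlow : ((-(lam / 2) * nd ^ 2 + lam / 2 * ny ^ 2 : ℝ) : EReal)
        ≤ lagReg lam L 0 ylam := by
      rw [lagReg, EReal.coe_add]
      refine add_le_add ?_ le_rfl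
      refine le_iInf fun w => ?_
      have hreal' : -(lam / 2) * nd ^ 2 ≤ ⟪-r₀, w⟫ + ‖(0 : H) - w‖ ^ 2 / (2 * lam) := by
        have expand : ‖w + lam • (-r₀)‖ ^ 2
            = ‖w‖ ^ 2 + 2 * (lam * ⟪-r₀, w⟫) + lam ^ 2 * nd ^ 2 := by
          rw [norm_add_sq_real, real_inner_smul_right, real_inner_comm w (-r₀),
            norm_smul, hnd]
          rw [Real.norm_eq_abs, abs_of_pos hlam, norm_neg]
          ring
        have h3 : (0 : ℝ) ≤ ‖w + lam • (-r₀)‖ ^ 2 / (2 * lam) :=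
          div_nonneg (sq_nonneg _) (by positivity)
        have h4 : ‖w + lam • (-r₀)‖ ^ 2 / (2 * lam)
            = ‖w‖ ^ 2 / (2 * lam) + ⟪-r₀, w⟫ + lam / 2 * nd ^ 2 := by
          rw [expand]; field_simp
        rw [h4] at h3
        have h5 : ‖(0 : H) - w‖ = ‖w‖ := by rw [zero_sub, norm_neg]
        rw [h5]
        linarith
      calc ((-(lam / 2) * nd ^ 2 : ℝ) : EReal)
          ≤ ((⟪-r₀, w⟫ + ‖(0 : H) - w‖ ^ 2 / (2 * lam) : ℝ) : EReal) :=
            EReal.coe_le_coe_iff.mpr hreal'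
        _ = ((⟪-r₀, w⟫ : ℝ) : EReal) + ((‖(0 : H) - w‖ ^ 2 / (2 * lam) : ℝ) : EReal) :=
            EReal.coe_add _ _
        _ ≤ L (w, ylam) + ((‖(0 : H) - w‖ ^ 2 / (2 * lam) : ℝ) : EReal) :=
            add_le_add (hlb w ylam) le_rfl
    -- upper bound on lagReg lam L (-(lam • ylam)) r₀
    have hup : lagReg lam L (-(lam • ylam)) r₀
        ≤ ((lam / 2 * ny ^ 2 + lam / 2 * nd ^ 2 : ℝ) : EReal) := by
      rw [lagReg, ← hnd, EReal.coe_add]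
      refine add_le_add ?_ le_rfl
      refine le_trans (iInf_le _ 0) ?_
      have h6 : ‖-(lam • ylam) - (0 : H)‖ ^ 2 / (2 * lam) = lam / 2 * ny ^ 2 := by
        rw [sub_zero, norm_neg, norm_smul, Real.norm_eq_abs, abs_of_pos hlam, hny]
        field_simp
      rw [h6]
      calc L (0, r₀) + ((lam / 2 * ny ^ 2 : ℝ) : EReal)
          ≤ 0 + ((lam / 2 * ny ^ 2 : ℝ) : EReal) := add_le_add hmid le_rfl
        _ = ((lam / 2 * ny ^ 2 : ℝ) : EReal) := zero_add _
    -- combine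
    have hchain : ((-(lam / 2) * nd ^ 2 + lam / 2 * ny ^ 2 + lam * ny ^ 2 : ℝ) : EReal)
        ≤ ((lam / 2 * ny ^ 2 + lam / 2 * nd ^ 2 : ℝ) : EReal) := by
      calc ((-(lam / 2) * nd ^ 2 + lam / 2 * ny ^ 2 + lam * ny ^ 2 : ℝ) : EReal)
          = ((-(lam / 2) * nd ^ 2 + lam / 2 * ny ^ 2 : ℝ) : EReal)
            + ((lam * ny ^ 2 : ℝ) : EReal) := EReal.coe_add _ _
        _ ≤ lagReg lam L 0 ylam + ((lam * ny ^ 2 : ℝ) : EReal) := add_le_add hlow le_rfl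
        _ ≤ lagReg lam L (-(lam • ylam)) r₀ := hy'
        _ ≤ _ := hup
    rw [EReal.coe_le_coe_iff] at hchain
    have hsq : ny ^ 2 ≤ nd ^ 2 := by
      have h7 : lam * ny ^ 2 ≤ lam * nd ^ 2 := by linarith
      exact le_of_mul_le_mul_left h7 hlam
    exact (pow_le_pow_iff_left₀ (norm_nonneg _) (norm_nonneg _) two_ne_zero).mp hsq
  have hbound : ‖r₀‖ ≤ (‖p‖ + ‖q‖) / 2 := by
    rw [hr₀, norm_smul, Real.norm_eq_abs]
    have := norm_sub_le q p
    rw [abs_of_pos (by norm_num : (0:ℝ) < 1/2)]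
    linarith
  refine ⟨⟨(‖p‖ + ‖q‖) / 2 + 1, by positivity, fun lam hlam ylam hy => ?_⟩,
    fun lam hlam ylam hy => le_trans (hmain lam hlam ylam hy) hbound⟩
  have := le_trans (hmain lam hlam ylam hy) hbound
  linarith
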